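/- Let a, b, μ ∈ ℝ, r > 0, set λ_a = 1 + a r² (assumed positive), Q = √(r² + (b r²/2 − μ λ_a)²) and λ = λ_a/Q, and let γ(s) = (r sin(λ s), −r cos(λ s), λ μ s). Then for all s ∈ ℝ: h_{γ(s)}(γ'(s), E₁(γ(s))) = (r/Q) cos(λ s), h_{γ(s)}(γ'(s), E₂(γ(s))) = (r/Q) sin(λ s), and h_{γ(s)}(γ'(s), E₃(γ(s))) = (μ λ_a − b r²/2)/Q. In particular, the h-inner product of the unit tangent γ' with the vertical vector field E₃ is constant along γ, i.e. the helix makes a constant angle with E₃. -/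

import Mathlib

/-- `λ_a(p) = 1 + a(x² + y²)` for `p = (x,y,z)`. -/
noncomputable def bcvLambda (a : ℝ) (p : ℝ × ℝ × ℝ) : ℝ :=
  1 + a * (p.1 ^ 2 + p.2.1 ^ 2)

/-- The Bianchi–Cartan–Vranceanu metric `h_{a,b}` at the point `p`, applied to the
vectors `u` and `v`. -/
noncomputable def bcvMetric (a b : ℝ) (p u v : ℝ × ℝ × ℝ) : ℝ :=
  (u.1 * v.1 + u.2.1 * v.2.1) / (bcvLambda a p) ^ 2 +
    (u.2.2 + (b / 2) * (p.2.1 * u.1 - p.1 * u.2.1) / bcvLambda a p) *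
      (v.2.2 + (b / 2) * (p.2.1 * v.1 - p.1 * v.2.1) / bcvLambda a p)

/-- The first vector of the standard orthonormal frame of the BCV space. -/
noncomputable def bcvE1 (a b : ℝ) (p : ℝ × ℝ × ℝ) : ℝ × ℝ × ℝ :=
  (bcvLambda a p, 0, -b * p.2.1 / 2)

/-- The second vector of the standard orthonormal frame of the BCV space. -/
noncomputable def bcvE2 (a b : ℝ) (p : ℝ × ℝ × ℝ) : ℝ × ℝ × ℝ :=
  (0, bcvLambda a p, b * p.1 / 2)

/-- The third (vertical) vector of the standard orthonormal frame of the BCV space. -/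
noncomputable def bcvE3 : ℝ × ℝ × ℝ :=
  (0, 0, 1)

/-- For the arc-length parametrized helix
`γ(s) = (r sin(λ s), −r cos(λ s), λ μ s)` with `λ = λ_a/Q`, `Q = √(r² + (b r²/2 − μ λ_a)²)`,
the components of the unit tangent `γ'` in the orthonormal frame `E₁, E₂, E₃` are
`(r/Q) cos(λ s)`, `(r/Q) sin(λ s)` and the constant `(μ λ_a − b r²/2)/Q`; in particular,
the helix makes a constant angle with the vertical vector field `E₃`. -/
theorem helix_tangent_frame_components (a b μ r : ℝ) (hr : 0 < r)
    (hla : 0 < 1 + a * r ^ 2) :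
    let la := 1 + a * r ^ 2
    let Q := Real.sqrt (r ^ 2 + (b * r ^ 2 / 2 - μ * la) ^ 2)
    let l := la / Q
    let γ : ℝ → ℝ × ℝ × ℝ := fun s => (r * Real.sin (l * s), -r * Real.cos (l * s), l * μ * s)
    ∀ s : ℝ,
      bcvMetric a b (γ s) (deriv γ s) (bcvE1 a b (γ s)) = (r / Q) * Real.cos (l * s) ∧
      bcvMetric a b (γ s) (deriv γ s) (bcvE2 a b (γ s)) = (r / Q) * Real.sin (l * s) ∧
      bcvMetric a b (γ s) (deriv γ s) bcvE3 = (μ * la - b * r ^ 2 / 2) / Q := by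
  intro la Q l γ s
  have hQpos : 0 < Q := Real.sqrt_pos.mpr (by positivity)
  have hQne : Q ≠ 0 := ne_of_gt hQpos
  have hQsq : Q ^ 2 = r ^ 2 + (b * r ^ 2 / 2 - μ * la) ^ 2 :=
    Real.sq_sqrt (by positivity)
  have hlane : la ≠ 0 := ne_of_gt hla
  have h1 : HasDerivAt (fun s : ℝ => l * s) l s := by
    simpa using (hasDerivAt_id s).const_mul l
  have hsin := (Real.hasDerivAt_sin (l * s)).comp s h1
  have hcos := (Real.hasDerivAt_cos (l * s)).comp s h1
  have hx := hsin.const_mul r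
  have hy := hcos.const_mul (-r)
  have hz : HasDerivAt (fun s : ℝ => l * μ * s) (l * μ) s := by
    simpa using (hasDerivAt_id s).const_mul (l * μ)
  have hγ : HasDerivAt γ
      (r * (Real.cos (l * s) * l), -r * (-Real.sin (l * s) * l), l * μ) s :=
    hx.prodMk (hy.prodMk hz)
  have hderiv : deriv γ s =
      (r * (Real.cos (l * s) * l), -r * (-Real.sin (l * s) * l), l * μ) := hγ.deriv
  have hpyth : Real.sin (l * s) ^ 2 + Real.cos (l * s) ^ 2 = 1 :=
    Real.sin_sq_add_cos_sq _
  have hlam : bcvLambda a (γ s) = la := by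
    simp only [bcvLambda, γ]
    linear_combination (a * r ^ 2) * hpyth
  have hQl : l * Q = la := div_mul_cancel₀ la hQne
  refine ⟨?_, ?_, ?_⟩ <;>
    simp only [bcvMetric, hderiv, hlam, bcvE1, bcvE2, bcvE3, γ, hlam] <;>
    field_simp
  · linear_combination (8 * la ^ 3 * r * Real.cos (l * s)) * hQl +
      (Real.cos (l * s) * (8 * a * r ^ 2 - 32 * a * r ^ 3 + 4 * a ^ 2 * r ^ 4 - 48 * a ^ 2 * r ^ 5 - 32 * a ^ 3 * r ^ 7 - 8 * a ^ 4 * r ^ 9 - 8 * r + 4)) * mul_inv_cancel₀ hQne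
  · linear_combination (8 * la ^ 3 * r * Real.sin (l * s)) * hQl +
      (Real.sin (l * s) * (8 * a * r ^ 2 - 32 * a * r ^ 3 + 4 * a ^ 2 * r ^ 4 - 48 * a ^ 2 * r ^ 5 - 32 * a ^ 3 * r ^ 7 - 8 * a ^ 4 * r ^ 9 - 8 * r + 4)) * mul_inv_cancel₀ hQne
  · linear_combination (4 * μ * la - 2 * b * r ^ 2) * hQl +
      (-2 * b * r ^ 2 * (l * Q)) * hpyth +
      (4 * μ * (a * r ^ 2 + 2 * a ^ 2 * r ^ 4 + a ^ 3 * r ^ 6) - 2 * a * b * r ^ 4 - 2 * a ^ 2 * b * r ^ 6) * mul_inv_cancel₀ hQne +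
      (Q * Q⁻¹ * (-2 * a * b * r ^ 4 - 2 * a ^ 2 * b * r ^ 6)) * hpyth
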